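/- For every integer s ≥ 1, one has A_s = ∑_{n≥0} ((1/2)^{↑n} · (s/2)^{↑n} · ((s+1)/2)^{↑n}) / (2^{↑n} · (s+1)^{↑n} · n!), where A_s = ∑_{(m₁,…,m_s) ∈ ℕ^s} Cat_{m₁} ⋯ Cat_{m_s} · Cat_{m₁+⋯+m_s} · 16^{−(m₁+⋯+m_s)}, and both series converge. -/

import Mathlib

open Polynomial

/-- The star sum `A_s = ∑_{m ∈ ℕ^s} Cat_{m₁}⋯Cat_{m_s} · Cat_{m₁+⋯+m_s} · 16^{−(m₁+⋯+m_s)}`. -/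
noncomputable def starSum (s : ℕ) : ℝ :=
  ∑' m : Fin s → ℕ,
    (∏ i, (catalan (m i) : ℝ)) * (catalan (∑ i, m i) : ℝ) * ((16 : ℝ) ^ (∑ i, m i))⁻¹

namespace Stmt13Aux

open Finset
open scoped ENNReal

/-- The generating function of the Catalan numbers, over `ℕ`. -/
noncomputable def cps : PowerSeries ℕ := PowerSeries.mk catalan

lemma cps_eq : cps = 1 + PowerSeries.X * cps ^ 2 := by
  ext n
  cases n with
  | zero => simp [cps]
  | succ n =>
    rw [map_add, PowerSeries.coeff_succ_X_mul]
    simp only [cps, PowerSeries.coeff_mk, pow_two, PowerSeries.coeff_mul, catalan_succ']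
    simp [Nat.succ_ne_zero, PowerSeries.coeff_one]

/-- Coefficients of powers of the Catalan generating function. -/
noncomputable def Kc (s N : ℕ) : ℕ := PowerSeries.coeff (R := ℕ) N (cps ^ s)

lemma Kc_zero (N : ℕ) : Kc 0 N = if N = 0 then 1 else 0 := by
  simp [Kc, PowerSeries.coeff_one]

lemma Kc_succ (s N : ℕ) :
    Kc (s + 1) N = ∑ p ∈ Finset.HasAntidiagonal.antidiagonal N, catalan p.1 * Kc s p.2 := by
  have h : cps ^ (s + 1) = cps * cps ^ s := by ring
  rw [Kc, h, PowerSeries.coeff_mul]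
  refine Finset.sum_congr rfl fun p _ => ?_
  simp [cps, Kc]

lemma Kc_N0 (s : ℕ) : Kc s 0 = 1 := by
  have : (PowerSeries.constantCoeff (R := ℕ)) cps = 1 := by simp [cps]
  simp [Kc, ← PowerSeries.coeff_zero_eq_constantCoeff,
    PowerSeries.coeff_zero_eq_constantCoeff, map_pow, this]

lemma Kc_one (N : ℕ) : Kc 1 N = catalan N := by simp [Kc, cps]

lemma Kc_rec (s N : ℕ) : Kc (s + 1) (N + 1) = Kc s (N + 1) + Kc (s + 2) N := by
  have h : cps ^ (s + 1) = cps ^ s + PowerSeries.X * cps ^ (s + 2) := by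
    calc cps ^ (s+1) = cps ^ s * cps := by ring
    _ = cps ^ s * (1 + PowerSeries.X * cps ^ 2) := by rw [← cps_eq]
    _ = cps ^ s + PowerSeries.X * cps ^ (s + 2) := by ring
  simp [Kc, h, PowerSeries.coeff_succ_X_mul]

lemma fact_ne (n : ℕ) : ((n.factorial : ℝ)) ≠ 0 :=
  Nat.cast_ne_zero.2 (Nat.factorial_ne_zero n)

lemma cat_real (n : ℕ) :
    (catalan n : ℝ) = (2 * n).factorial / (n.factorial * (n + 1).factorial) := by
  have h1 : ((n : ℝ) + 1) * catalan n = ((2 * n).choose n : ℝ) := by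
    exact_mod_cast congrArg (Nat.cast : ℕ → ℝ) (succ_mul_catalan_eq_centralBinom n)
  have h2 : ((2 * n).choose n : ℝ) = (2 * n).factorial / (n.factorial * n.factorial) := by
    rw [Nat.cast_choose ℝ (by omega : n ≤ 2 * n)]
    have e : 2 * n - n = n := by omega
    rw [e]
  rw [h2] at h1
  have h3 : ((n + 1).factorial : ℝ) = (n + 1) * n.factorial := by
    rw [Nat.factorial_succ]; push_cast; ring
  field_simp [fact_ne, h3] at h1 ⊢
  rw [h3]; ring_nf; ring_nf at h1; linarith

lemma Kc_closed : ∀ N p : ℕ, (Kc (p + 1) N : ℝ) =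
    ((p : ℝ) + 1) * (2 * N + p).factorial / (N.factorial * (N + p + 1).factorial) := by
  intro N
  induction N with
  | zero =>
    intro p
    rw [Kc_N0]
    have h : ((p + 1).factorial : ℝ) = ((p : ℝ) + 1) * p.factorial := by
      rw [Nat.factorial_succ]; push_cast; ring
    simp only [Nat.mul_zero, Nat.zero_add, Nat.factorial_zero, Nat.cast_one, one_mul, h]
    field_simp
  | succ N IH =>
    intro p
    induction p with
    | zero =>
      rw [Kc_one, cat_real]
      norm_num
    | succ p IHp =>
      rw [Kc_rec (p + 1) N]
      push_cast [IH (p + 2), IHp]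
      have e1 : 2 * (N + 1) + (p + 1) = (2 * N + p + 2) + 1 := by ring
      have e2 : (N + 1) + (p + 1) + 1 = (N + p + 2) + 1 := by ring
      have e3 : 2 * (N + 1) + p = 2 * N + p + 2 := by ring
      have e4 : N + 1 + p + 1 = N + p + 2 := by ring
      have e5 : 2 * N + (p + 2) = 2 * N + p + 2 := by ring
      have e6 : N + (p + 2) + 1 = (N + p + 2) + 1 := by ring
      rw [e1, e2, e3, e4, e5, e6, Nat.factorial_succ (2 * N + p + 2),
        Nat.factorial_succ (N + p + 2), Nat.factorial_succ N]
      have hne1 := fact_ne N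
      have hne2 := fact_ne (N + p + 2)
      have hne3 := fact_ne (2 * N + p + 2)
      have hN : ((N : ℝ) + 1) ≠ 0 := by positivity
      push_cast
      field_simp
      ring

lemma poch_half (n : ℕ) : (ascPochhammer ℝ n).eval (1/2 : ℝ) =
    (2 * n).factorial / (4 ^ n * n.factorial) := by
  induction n with
  | zero => simp
  | succ n IH =>
    rw [ascPochhammer_succ_eval, IH]
    have e : 2 * (n + 1) = (2 * n + 1) + 1 := by ring
    rw [e, Nat.factorial_succ, Nat.factorial_succ (2 * n), Nat.factorial_succ n]
    have h1 := fact_ne n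
    have h2 := fact_ne (2 * n)
    have h4 : (4 : ℝ) ^ n ≠ 0 := by positivity
    push_cast
    field_simp
    ring

lemma poch_two (n : ℕ) : (ascPochhammer ℝ n).eval (2 : ℝ) = ((n + 1).factorial : ℝ) := by
  induction n with
  | zero => simp
  | succ n IH =>
    rw [ascPochhammer_succ_eval, IH, Nat.factorial_succ (n + 1)]
    push_cast
    ring

lemma poch_nat (m n : ℕ) : (ascPochhammer ℝ n).eval ((m : ℝ) + 1) =
    ((m + n).factorial : ℝ) / (m.factorial : ℝ) := by
  induction n with
  | zero => simp [fact_ne m]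
  | succ n IH =>
    rw [ascPochhammer_succ_eval, IH]
    have e : m + (n + 1) = (m + n) + 1 := by ring
    rw [e, Nat.factorial_succ (m + n)]
    have h1 := fact_ne m
    push_cast
    field_simp
    ring

lemma poch_pair (p : ℕ) : ∀ n : ℕ,
    (ascPochhammer ℝ n).eval (((p : ℝ) + 1)/2) * (ascPochhammer ℝ n).eval (((p : ℝ) + 2)/2) =
    ((p + 2 * n).factorial : ℝ) / (p.factorial * 4 ^ n) := by
  intro n
  induction n with
  | zero => simp [fact_ne p]
  | succ n IH =>
    rw [ascPochhammer_succ_eval, ascPochhammer_succ_eval]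
    have e : p + 2 * (n + 1) = ((p + 2 * n) + 1) + 1 := by ring
    rw [show (ascPochhammer ℝ n).eval (((p : ℝ) + 1)/2) * (((p : ℝ) + 1)/2 + n) *
        ((ascPochhammer ℝ n).eval (((p : ℝ) + 2)/2) * (((p : ℝ) + 2)/2 + n)) =
        ((ascPochhammer ℝ n).eval (((p : ℝ) + 1)/2) * (ascPochhammer ℝ n).eval (((p : ℝ) + 2)/2)) *
        ((((p : ℝ) + 1)/2 + n) * (((p : ℝ) + 2)/2 + n)) by ring, IH, e,
      Nat.factorial_succ ((p + 2 * n) + 1), Nat.factorial_succ (p + 2 * n)]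
    have h1 := fact_ne p
    have h2 := fact_ne (p + 2 * n)
    have h4 : (4 : ℝ) ^ n ≠ 0 := by positivity
    push_cast
    field_simp
    ring

lemma termwise (p n : ℕ) :
    (ascPochhammer ℝ n).eval (1 / 2 : ℝ) * (ascPochhammer ℝ n).eval ((((p : ℕ) + 1 : ℕ) : ℝ) / 2) *
      (ascPochhammer ℝ n).eval (((((p : ℕ) + 1 : ℕ) : ℝ) + 1) / 2) /
      ((ascPochhammer ℝ n).eval (2 : ℝ) * (ascPochhammer ℝ n).eval ((((p : ℕ) + 1 : ℕ) : ℝ) + 1) *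
        (n.factorial : ℝ)) =
    (((p : ℝ) + 1) * (2 * n + p).factorial / (n.factorial * (n + p + 1).factorial)) *
      (catalan n : ℝ) * ((16 : ℝ) ^ n)⁻¹ := by
  have hA : (((p : ℕ) + 1 : ℕ) : ℝ) / 2 = ((p : ℝ) + 1) / 2 := by push_cast; ring
  have hB : ((((p : ℕ) + 1 : ℕ) : ℝ) + 1) / 2 = ((p : ℝ) + 2) / 2 := by push_cast; ring
  have hC : (((p : ℕ) + 1 : ℕ) : ℝ) + 1 = (((p + 1 : ℕ)) : ℝ) + 1 := by push_cast; ring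
  rw [hA, hB, hC, poch_two, poch_nat (p + 1) n, mul_assoc, poch_half, cat_real,
    mul_comm ((ascPochhammer ℝ n).eval (((p : ℝ) + 1)/2)), mul_comm]
  rw [show (ascPochhammer ℝ n).eval (((p : ℝ) + 2)/2) * (ascPochhammer ℝ n).eval (((p : ℝ) + 1)/2)
      = (ascPochhammer ℝ n).eval (((p : ℝ) + 1)/2) * (ascPochhammer ℝ n).eval (((p : ℝ) + 2)/2)
      by ring, poch_pair]
  have e1 : p + 1 + n = n + p + 1 := by ring
  have e2 : p + 2 * n = 2 * n + p := by ring
  rw [e1, e2, Nat.factorial_succ p, Nat.factorial_succ (n + p), Nat.factorial_succ n,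
    show (16 : ℝ) = 4 * 4 by norm_num, mul_pow]
  have h1 := fact_ne n
  have h2 := fact_ne (n + p)
  have h3 := fact_ne p
  have h4 := fact_ne (2 * n)
  have h5 := fact_ne (2 * n + p)
  have h6 : (4 : ℝ) ^ n ≠ 0 := by positivity
  push_cast
  field_simp

lemma group : ∀ (s : ℕ) (w : ℕ → ℝ≥0∞),
    (∑' m : Fin s → ℕ, (∏ i, (catalan (m i) : ℝ≥0∞)) * w (∑ i, m i))
    = ∑' N : ℕ, (Kc s N : ℝ≥0∞) * w N := by
  intro s
  induction s with
  | zero =>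
    intro w
    rw [tsum_eq_single (fun _ => (0:ℕ)) (fun b hb => absurd (Subsingleton.elim b _) hb),
      tsum_eq_single 0 (by intro b hb; simp [Kc_zero, hb])]
    simp [Kc_zero]
  | succ s IH =>
    intro w
    rw [← Equiv.tsum_eq (Fin.consEquiv (fun _ : Fin (s+1) => ℕ))
      (fun m => (∏ i, (catalan (m i) : ℝ≥0∞)) * w (∑ i, m i))]
    have hval : ∀ (q : ℕ × (Fin s → ℕ)),
        (∏ i, (catalan (((Fin.consEquiv (fun _ : Fin (s+1) => ℕ)) q) i) : ℝ≥0∞)) *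
          w (∑ i, ((Fin.consEquiv (fun _ : Fin (s+1) => ℕ)) q) i)
        = (catalan q.1 : ℝ≥0∞) * ((∏ i, (catalan (q.2 i) : ℝ≥0∞)) * w (q.1 + ∑ i, q.2 i)) := by
      rintro ⟨k, m⟩
      have h1 : (Fin.consEquiv (fun _ : Fin (s+1) => ℕ)) (k, m)
          = Fin.cons (α := fun _ => ℕ) k m := rfl
      simp only [h1]
      rw [Fin.prod_univ_succ, Fin.sum_univ_succ]
      simp only [Fin.cons_zero, Fin.cons_succ]
      ring
    calc ∑' q : ℕ × (Fin s → ℕ),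
          (∏ i, (catalan (((Fin.consEquiv (fun _ : Fin (s+1) => ℕ)) q) i) : ℝ≥0∞)) *
            w (∑ i, ((Fin.consEquiv (fun _ : Fin (s+1) => ℕ)) q) i)
        = ∑' q : ℕ × (Fin s → ℕ), (catalan q.1 : ℝ≥0∞) *
            ((∏ i, (catalan (q.2 i) : ℝ≥0∞)) * w (q.1 + ∑ i, q.2 i)) := tsum_congr hval
      _ = ∑' (k : ℕ) (m : Fin s → ℕ), (catalan k : ℝ≥0∞) *
            ((∏ i, (catalan (m i) : ℝ≥0∞)) * w (k + ∑ i, m i)) := ENNReal.tsum_prod'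
      _ = ∑' (k : ℕ), (catalan k : ℝ≥0∞) * ∑' (m : Fin s → ℕ),
            ((∏ i, (catalan (m i) : ℝ≥0∞)) * w (k + ∑ i, m i)) := by
          exact tsum_congr fun k => ENNReal.tsum_mul_left
      _ = ∑' (k : ℕ), (catalan k : ℝ≥0∞) * ∑' (N : ℕ), (Kc s N : ℝ≥0∞) * w (k + N) := by
          exact tsum_congr fun k => by rw [IH (fun j => w (k + j))]
      _ = ∑' (k : ℕ) (N : ℕ), (catalan k : ℝ≥0∞) * ((Kc s N : ℝ≥0∞) * w (k + N)) := by
          exact tsum_congr fun k => ENNReal.tsum_mul_left.symm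
      _ = ∑' q : ℕ × ℕ, (catalan q.1 : ℝ≥0∞) * ((Kc s q.2 : ℝ≥0∞) * w (q.1 + q.2)) :=
          (ENNReal.tsum_prod' (f := fun q : ℕ × ℕ =>
            (catalan q.1 : ℝ≥0∞) * ((Kc s q.2 : ℝ≥0∞) * w (q.1 + q.2)))).symm
      _ = ∑' x : (Σ n : ℕ, Finset.HasAntidiagonal.antidiagonal n),
            (catalan (Finset.HasAntidiagonal.sigmaAntidiagonalEquivProd x).1 : ℝ≥0∞) *
            ((Kc s (Finset.HasAntidiagonal.sigmaAntidiagonalEquivProd x).2 : ℝ≥0∞) *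
              w ((Finset.HasAntidiagonal.sigmaAntidiagonalEquivProd x).1 +
                (Finset.HasAntidiagonal.sigmaAntidiagonalEquivProd x).2)) := by
          rw [Equiv.tsum_eq Finset.HasAntidiagonal.sigmaAntidiagonalEquivProd
            (fun q : ℕ × ℕ => (catalan q.1 : ℝ≥0∞) * ((Kc s q.2 : ℝ≥0∞) * w (q.1 + q.2)))]
      _ = ∑' (N : ℕ), ∑' (p : Finset.HasAntidiagonal.antidiagonal N),
            (catalan (p : ℕ × ℕ).1 : ℝ≥0∞) * ((Kc s (p : ℕ × ℕ).2 : ℝ≥0∞) *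
              w ((p : ℕ × ℕ).1 + (p : ℕ × ℕ).2)) := ENNReal.tsum_sigma' _
      _ = ∑' (N : ℕ), (Kc (s + 1) N : ℝ≥0∞) * w N := by
          refine tsum_congr fun N => ?_
          rw [tsum_fintype, Finset.sum_coe_sort (Finset.HasAntidiagonal.antidiagonal N)
            (fun p => (catalan p.1 : ℝ≥0∞) * ((Kc s p.2 : ℝ≥0∞) * w (p.1 + p.2)))]
          rw [show ∑ p ∈ Finset.HasAntidiagonal.antidiagonal N,
              (catalan p.1 : ℝ≥0∞) * ((Kc s p.2 : ℝ≥0∞) * w (p.1 + p.2))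
              = ∑ p ∈ Finset.HasAntidiagonal.antidiagonal N,
              ((catalan p.1 : ℝ≥0∞) * (Kc s p.2 : ℝ≥0∞)) * w N from
            Finset.sum_congr rfl fun p hp => by
              rw [Finset.HasAntidiagonal.mem_antidiagonal] at hp
              rw [hp, mul_assoc]]
          rw [← Finset.sum_mul, Kc_succ]
          push_cast
          ring_nf

lemma choose_le_two_pow (n k : ℕ) : n.choose k ≤ 2 ^ n := by
  rcases le_or_gt k n with h | h
  · calc n.choose k ≤ ∑ m ∈ Finset.range (n + 1), n.choose m :=
        Finset.single_le_sum (fun i _ => Nat.zero_le _) (Finset.mem_range.2 (by omega))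
    _ = 2 ^ n := Nat.sum_range_choose n
  · rw [Nat.choose_eq_zero_of_lt h]; exact Nat.zero_le _

lemma cat_le (N : ℕ) : (catalan N : ℝ) ≤ 4 ^ N / ((N : ℝ) + 1) := by
  have h1 : (N + 1) * catalan N ≤ 4 ^ N := by
    calc (N + 1) * catalan N = N.centralBinom := succ_mul_catalan_eq_centralBinom N
    _ = (2 * N).choose N := Nat.centralBinom_eq_two_mul_choose N
    _ ≤ 2 ^ (2 * N) := choose_le_two_pow _ _
    _ = 4 ^ N := by rw [pow_mul]; norm_num
  have h2 : ((N : ℝ) + 1) * catalan N ≤ 4 ^ N := by exact_mod_cast h1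
  rw [le_div_iff₀ (by positivity)]
  nlinarith [h2]

lemma Kc_le (p N : ℕ) : (Kc (p + 1) N : ℝ) ≤ ((p : ℝ) + 1) * 2 ^ p * 4 ^ N / ((N : ℝ) + 1) := by
  rw [Kc_closed]
  have hch : ((2 * N + p).choose N : ℝ)
      = (2 * N + p).factorial / (N.factorial * (N + p).factorial) := by
    rw [Nat.cast_choose ℝ (by omega : N ≤ 2 * N + p)]
    have e : 2 * N + p - N = N + p := by omega
    rw [e]
  have hKc : ((p : ℝ) + 1) * (2 * N + p).factorial / (N.factorial * (N + p + 1).factorial)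
      = ((p : ℝ) + 1) * ((2 * N + p).choose N : ℝ) / ((N : ℝ) + p + 1) := by
    rw [hch, Nat.factorial_succ (N + p)]
    have h1 := fact_ne N
    have h2 := fact_ne (N + p)
    push_cast
    field_simp
  rw [hKc]
  have hcb : ((2 * N + p).choose N : ℝ) ≤ 2 ^ p * 4 ^ N := by
    have h2 : ((2 * N + p).choose N : ℝ) ≤ 2 ^ (2 * N + p) := by
      exact_mod_cast choose_le_two_pow (2 * N + p) N
    calc ((2 * N + p).choose N : ℝ) ≤ 2 ^ (2 * N + p) := h2
    _ = 2 ^ p * 4 ^ N := by rw [pow_add, pow_mul]; norm_num; ring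
  calc ((p : ℝ) + 1) * ((2 * N + p).choose N : ℝ) / ((N : ℝ) + p + 1)
      ≤ ((p : ℝ) + 1) * (2 ^ p * 4 ^ N) / ((N : ℝ) + 1) := by
        apply div_le_div₀ (by positivity) _ (by positivity) (by linarith)
        exact mul_le_mul_of_nonneg_left hcb (by positivity)
    _ = ((p : ℝ) + 1) * 2 ^ p * 4 ^ N / ((N : ℝ) + 1) := by ring

lemma summable_a (p : ℕ) :
    Summable (fun N : ℕ => (Kc (p + 1) N : ℝ) * (catalan N : ℝ) * ((16 : ℝ) ^ N)⁻¹) := by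
  have base : Summable (fun N : ℕ => 1 / ((N : ℝ) + 1) ^ 2) := by
    have h0 : Summable (fun n : ℕ => 1 / (n : ℝ) ^ 2) :=
      Real.summable_one_div_nat_pow.mpr one_lt_two
    have := (summable_nat_add_iff (f := fun n : ℕ => 1 / (n : ℝ) ^ 2) 1).mpr h0
    refine this.congr fun n => ?_
    push_cast
    ring
  refine Summable.of_nonneg_of_le (fun N => by positivity) (fun N => ?_)
    ((base.mul_left (((p : ℝ) + 1) * 2 ^ p)))
  calc (Kc (p + 1) N : ℝ) * (catalan N : ℝ) * ((16 : ℝ) ^ N)⁻¹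
      ≤ (((p : ℝ) + 1) * 2 ^ p * 4 ^ N / ((N : ℝ) + 1)) * (4 ^ N / ((N : ℝ) + 1)) *
          ((16 : ℝ) ^ N)⁻¹ := by
        have h1 := Kc_le p N
        have h2 := cat_le N
        gcongr
    _ = (((p : ℝ) + 1) * 2 ^ p) * (1 / ((N : ℝ) + 1) ^ 2) := by
        rw [show (16 : ℝ) = 4 * 4 by norm_num, mul_pow]
        have : ((N : ℝ) + 1) ≠ 0 := by positivity
        have h4 : (4 : ℝ) ^ N ≠ 0 := by positivity
        field_simp

end Stmt13Aux

open Stmt13Aux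
open scoped ENNReal

/-- For `s ≥ 1`, `A_s = ₃F₂(1/2, s/2, (s+1)/2; 2, s+1; 1)`, both series converging. -/
theorem stmt_13 (s : ℕ) (hs : 1 ≤ s) :
    Summable (fun m : Fin s → ℕ =>
      (∏ i, (catalan (m i) : ℝ)) * (catalan (∑ i, m i) : ℝ) * ((16 : ℝ) ^ (∑ i, m i))⁻¹) ∧
    Summable (fun n : ℕ =>
      (ascPochhammer ℝ n).eval (1 / 2 : ℝ) * (ascPochhammer ℝ n).eval ((s : ℝ) / 2) *
        (ascPochhammer ℝ n).eval (((s : ℝ) + 1) / 2) /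
        ((ascPochhammer ℝ n).eval (2 : ℝ) * (ascPochhammer ℝ n).eval ((s : ℝ) + 1) *
          (n.factorial : ℝ))) ∧
    starSum s =
      ∑' n : ℕ,
        (ascPochhammer ℝ n).eval (1 / 2 : ℝ) * (ascPochhammer ℝ n).eval ((s : ℝ) / 2) *
          (ascPochhammer ℝ n).eval (((s : ℝ) + 1) / 2) /
          ((ascPochhammer ℝ n).eval (2 : ℝ) * (ascPochhammer ℝ n).eval ((s : ℝ) + 1) *
            (n.factorial : ℝ)) := by
  obtain ⟨p, rfl⟩ : ∃ p, s = p + 1 := ⟨s - 1, by omega⟩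
  set a : ℕ → ℝ := fun N => (Kc (p + 1) N : ℝ) * (catalan N : ℝ) * ((16 : ℝ) ^ N)⁻¹ with ha
  have hsa : Summable a := summable_a p
  have hanon : ∀ N, 0 ≤ a N := fun N => by rw [ha]; positivity
  have hts : ∀ n : ℕ,
      (ascPochhammer ℝ n).eval (1 / 2 : ℝ) * (ascPochhammer ℝ n).eval (((p + 1 : ℕ) : ℝ) / 2) *
        (ascPochhammer ℝ n).eval ((((p + 1 : ℕ) : ℝ) + 1) / 2) /
        ((ascPochhammer ℝ n).eval (2 : ℝ) * (ascPochhammer ℝ n).eval (((p + 1 : ℕ) : ℝ) + 1) *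
          (n.factorial : ℝ)) = a n := by
    intro n
    rw [termwise p n, ha]
    simp only []
    rw [Kc_closed n p]
  set G : (Fin (p + 1) → ℕ) → ℝ≥0∞ := fun m =>
    (∏ i, (catalan (m i) : ℝ≥0∞)) *
      ((catalan (∑ i, m i) : ℝ≥0∞) * ((16 : ℝ≥0∞) ^ (∑ i, m i))⁻¹) with hGdef
  have hG : ∑' m, G m = ∑' N : ℕ, (Kc (p + 1) N : ℝ≥0∞) *
      ((catalan N : ℝ≥0∞) * ((16 : ℝ≥0∞) ^ N)⁻¹) :=
    group (p + 1) (fun N => (catalan N : ℝ≥0∞) * ((16 : ℝ≥0∞) ^ N)⁻¹)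
  have hwN : ∀ N : ℕ, (Kc (p + 1) N : ℝ≥0∞) * ((catalan N : ℝ≥0∞) * ((16 : ℝ≥0∞) ^ N)⁻¹)
      = ENNReal.ofReal (a N) := by
    intro N
    rw [ha]
    rw [ENNReal.ofReal_mul (by positivity), ENNReal.ofReal_mul (by positivity)]
    rw [ENNReal.ofReal_natCast, ENNReal.ofReal_natCast,
      ENNReal.ofReal_inv_of_pos (by positivity), ENNReal.ofReal_pow (by norm_num)]
    norm_num
    ring
  have hfin : ∑' m, G m ≠ ⊤ := by
    rw [hG, tsum_congr hwN, ← ENNReal.ofReal_tsum_of_nonneg hanon hsa]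
    exact ENNReal.ofReal_ne_top
  have hGtop : ∀ m, G m ≠ ⊤ := by
    intro m
    rw [hGdef]
    refine ENNReal.mul_ne_top ?_ (ENNReal.mul_ne_top (ENNReal.natCast_ne_top _) ?_)
    · refine ENNReal.prod_ne_top ?_
      intro i _
      exact ENNReal.natCast_ne_top _
    · exact ENNReal.inv_ne_top.2 (by positivity)
  have hfG : ∀ m : Fin (p + 1) → ℕ,
      (∏ i, (catalan (m i) : ℝ)) * (catalan (∑ i, m i) : ℝ) * ((16 : ℝ) ^ (∑ i, m i))⁻¹
      = (G m).toReal := by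
    intro m
    rw [hGdef]
    rw [ENNReal.toReal_mul, ENNReal.toReal_mul, ENNReal.toReal_inv, ENNReal.toReal_pow]
    simp [mul_assoc]
  have hsumf : Summable (fun m : Fin (p + 1) → ℕ =>
      (∏ i, (catalan (m i) : ℝ)) * (catalan (∑ i, m i) : ℝ) * ((16 : ℝ) ^ (∑ i, m i))⁻¹) :=
    (ENNReal.summable_toReal hfin).congr fun m => (hfG m).symm
  refine ⟨hsumf, ?_, ?_⟩
  · exact hsa.congr fun n => (hts n).symm
  · rw [starSum]
    calc ∑' m : Fin (p + 1) → ℕ,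
        (∏ i, (catalan (m i) : ℝ)) * (catalan (∑ i, m i) : ℝ) * ((16 : ℝ) ^ (∑ i, m i))⁻¹
        = ∑' m, (G m).toReal := tsum_congr hfG
      _ = (∑' m, G m).toReal := (ENNReal.tsum_toReal_eq hGtop).symm
      _ = (ENNReal.ofReal (∑' N, a N)).toReal := by
          rw [hG, tsum_congr hwN, ← ENNReal.ofReal_tsum_of_nonneg hanon hsa]
      _ = ∑' N, a N := ENNReal.toReal_ofReal (tsum_nonneg hanon)
      _ = _ := tsum_congr fun n => (hts n).symm
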